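/- Let φ be a nilpotent endomorphism of a finite-dimensional K-vector space V and σ an arbitrary endomorphism of V. If every endomorphism commuting with φ also commutes with σ (Cen(φ) ⊆ Cen(σ)), then σ is a polynomial in φ, i.e., σ = f(φ) for some polynomial f ∈ K[z]. -/

import Mathlib

open Polynomial Module

theorem stmt10 {K V : Type*} [Field K] [AddCommGroup V] [Module K V]
    [FiniteDimensional K V] (φ : Module.End K V) (hnil : IsNilpotent φ)
    (σ : Module.End K V)
    (hsub : ∀ ψ : Module.End K V, ψ * φ = φ * ψ → ψ * σ = σ * ψ) :
    ∃ f : Polynomial K, σ = Polynomial.aeval φ f := by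
  classical
  have hex : ∃ n, φ ^ n = 0 := hnil
  set m := Nat.find hex with hmdef
  have hm : φ ^ m = 0 := Nat.find_spec hex
  rcases Nat.eq_zero_or_pos m with hm0 | hmpos
  · -- φ^0 = 1 = 0, so everything is 0
    rw [hm0, pow_zero] at hm
    refine ⟨0, ?_⟩
    calc σ = 1 * σ := (one_mul σ).symm
    _ = 0 * σ := by rw [hm]
    _ = 0 := zero_mul σ
    _ = Polynomial.aeval φ 0 := by simp
  -- φ^(m-1) ≠ 0
  have hm1 : φ ^ (m - 1) ≠ 0 := Nat.find_min hex (by omega)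
  obtain ⟨v, hv⟩ : ∃ v, (φ ^ (m - 1)) v ≠ 0 := by
    by_contra h
    push_neg at h
    exact hm1 (LinearMap.ext fun x => h x)
  obtain ⟨l, hl⟩ : ∃ l : Module.Dual K V, l ((φ ^ (m - 1)) v) ≠ 0 := by
    by_contra h
    push_neg at h
    exact hv ((Module.forall_dual_apply_eq_zero_iff K _).mp h)
  -- the family b i = φ^i v
  set b : Fin m → V := fun i => (φ ^ (i : ℕ)) v with hbdef
  -- powers ≥ m vanish
  have hpow : ∀ n, m ≤ n → φ ^ n = 0 := fun n hn => pow_eq_zero_of_le hn hm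
  -- key triangularity lemma
  have hkey : ∀ c : Fin m → K,
      (∀ i : Fin m, l ((φ ^ (i : ℕ)) (∑ j, c j • b j)) = 0) → ∀ j, c j = 0 := by
    intro c hc
    suffices h : ∀ n, ∀ hn : n < m, c ⟨n, hn⟩ = 0 by
      intro j; have := h (j : ℕ) j.isLt; simpa using this
    intro n
    induction n using Nat.strong_induction_on with
    | _ n IH =>
    intro hj'
    set j : Fin m := ⟨n, hj'⟩ with hjdef
    have hj : (j : ℕ) < m := j.isLt
    have hi : m - 1 - (j : ℕ) < m := by omega
    have h0 := hc ⟨m - 1 - (j : ℕ), hi⟩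
    simp only [map_sum, map_smul] at h0
    rw [Finset.sum_eq_single j] at h0
    · have harith : m - 1 - (j : ℕ) + (j : ℕ) = m - 1 := by omega
      have : (φ ^ (m - 1 - (j : ℕ))) (b j) = (φ ^ (m - 1)) v := by
        rw [hbdef]
        simp only
        rw [← Module.End.mul_apply, ← pow_add, harith]
      rw [this] at h0
      simp only [smul_eq_mul] at h0
      exact (mul_eq_zero.mp h0).resolve_right hl
    · intro k _ hk
      rcases lt_or_gt_of_ne (fun h => hk (Fin.ext (by exact_mod_cast congrArg Fin.val h))) with hlt | hgt
      · -- k < j : c k = 0 by IH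
        have hck : c k = 0 := by
          have := IH (k : ℕ) (by exact hlt) k.isLt
          simpa using this
        simp [hck]
      · -- k > j : exponent ≥ m
        have hjn : (j : ℕ) = n := rfl
        have h5 : (j : ℕ) < (k : ℕ) := hgt
        have h6 : (k : ℕ) < m := k.isLt
        have : (φ ^ (m - 1 - (j : ℕ))) (b k) = 0 := by
          rw [hbdef]
          simp only
          rw [← Module.End.mul_apply, ← pow_add, hpow _ (by omega), LinearMap.zero_apply]
        rw [this, map_zero, smul_zero]
    · intro h
      exact absurd (Finset.mem_univ j) h
  -- linear independence
  have hli : LinearIndependent K b := by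
    rw [Fintype.linearIndependent_iff]
    intro c hc i
    exact hkey c (fun i => by rw [hc]; simp) i
  set W : Submodule K V := Submodule.span K (Set.range b) with hWdef
  let bW : Basis (Fin m) K W := Basis.span hli
  have hbW : ∀ i, (bW i : V) = b i := fun i => congrArg Subtype.val (Basis.span_apply hli i)
  -- the functional-coordinates map
  set Φ : V →ₗ[K] (Fin m → K) := LinearMap.pi (fun i : Fin m => l ∘ₗ (φ ^ (i : ℕ))) with hΦdef
  have hΦapp : ∀ (x : V) (i : Fin m), Φ x i = l ((φ ^ (i : ℕ)) x) := fun x i => rfl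
  -- ker Φ is φ-invariant
  have hker : ∀ x : V, Φ x = 0 → Φ (φ x) = 0 := by
    intro x hx
    funext i
    rw [hΦapp]
    rcases Nat.lt_or_ge ((i : ℕ) + 1) m with h1 | h1
    · have := congrFun hx ⟨(i : ℕ) + 1, h1⟩
      rw [hΦapp] at this
      simpa [pow_succ, Module.End.mul_apply] using this
    · rw [← Module.End.mul_apply, ← pow_succ, hpow _ h1]
      simp
  -- Φ restricted to W
  set ΦW : W →ₗ[K] (Fin m → K) := Φ ∘ₗ W.subtype with hΦWdef
  have hinj : Function.Injective ΦW := by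
    rw [← LinearMap.ker_eq_bot]
    rw [LinearMap.ker_eq_bot']
    intro w hw
    have hrep := Basis.sum_repr bW w
    set c : Fin m → K := fun i => bW.repr w i with hcdef
    have hwc : (w : V) = ∑ i, c i • b i := by
      rw [← hrep]
      push_cast
      exact Finset.sum_congr rfl fun i _ => by rw [hbW]
    have hc0 : ∀ j, c j = 0 := by
      apply hkey
      intro i
      rw [← hwc]
      have := congrFun hw i
      rw [hΦWdef] at this
      exact this
    have : (w : V) = 0 := by rw [hwc]; simp [hc0]
    exact Subtype.ext this
  have hbijW : Function.Bijective ΦW := by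
    refine ⟨hinj, ?_⟩
    have h1 : Module.finrank K W = Module.finrank K (Fin m → K) := by
      rw [Module.finrank_eq_card_basis bW]
      simp [Module.finrank_pi]
    exact (LinearMap.injective_iff_surjective_of_finrank_eq_finrank h1).mp hinj
  let e : W ≃ₗ[K] (Fin m → K) := LinearEquiv.ofBijective ΦW hbijW
  have he : ∀ w : W, e w = Φ (w : V) := fun w => rfl
  -- projection onto W
  set q : V →ₗ[K] W := (e.symm : (Fin m → K) →ₗ[K] W) ∘ₗ Φ with hqdef
  have hq : ∀ x : V, e (q x) = Φ x := by
    intro x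
    rw [hqdef]
    simp
  have hqW : ∀ w : W, q (w : V) = w := by
    intro w
    apply e.injective
    rw [hq, he]
  -- q is φ-semi-equivariant: Φ (φ x) = Φ (φ (q x))
  have hqφ : ∀ x : V, q (φ x) = q (φ ((q x : W) : V)) := by
    intro x
    have hdiff : Φ (x - ((q x : W) : V)) = 0 := by
      rw [map_sub, ← he, hq, sub_self]
    have h2 : Φ (φ x) = Φ (φ ((q x : W) : V)) := by
      have h3 := hker _ hdiff
      rw [map_sub, map_sub, sub_eq_zero] at h3
      exact h3
    apply e.injective
    rw [hq, hq, h2]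
  -- for each u, the commuting map ψ_u
  have main : ∀ u : V, ∃ ψ : Module.End K V,
      ψ * φ = φ * ψ ∧ ψ v = u ∧ (∀ i : Fin m, ψ (b i) = (φ ^ (i : ℕ)) u) ∧
      LinearMap.range ψ ≤ Submodule.span K (Set.range fun i : Fin m => (φ ^ (i : ℕ)) u) := by
    intro u
    set g : W →ₗ[K] V := Basis.constr bW K (fun i : Fin m => (φ ^ (i : ℕ)) u) with hgdef
    have hg : ∀ i, g (bW i) = (φ ^ (i : ℕ)) u := fun i => Basis.constr_basis bW K _ i
    set ψ : Module.End K V := g ∘ₗ q with hψdef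
    -- (2) : g (q (φ w)) = φ (g w) for w in W image... we prove on basis by computing q(φ (bW i))
    have hqφb : ∀ i : Fin m, g (q (φ (b i))) = φ (g (bW i)) := by
      intro i
      rcases Nat.lt_or_ge ((i : ℕ) + 1) m with h1 | h1
      · have hb1 : φ (b i) = b ⟨(i : ℕ) + 1, h1⟩ := by
          rw [hbdef]
          simp only
          rw [← Module.End.mul_apply, ← pow_succ']
        rw [hb1]
        have : q (b ⟨(i : ℕ) + 1, h1⟩) = bW ⟨(i : ℕ) + 1, h1⟩ := by
          rw [← hbW]; exact hqW _
        rw [this, hg, hg, ← Module.End.mul_apply, ← pow_succ']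
      · have hb1 : φ (b i) = 0 := by
          rw [hbdef]
          simp only
          rw [← Module.End.mul_apply, ← pow_succ', hpow _ h1, LinearMap.zero_apply]
        rw [hb1, map_zero, map_zero, hg, ← Module.End.mul_apply, ← pow_succ',
          hpow _ h1, LinearMap.zero_apply]
    have hcomm : ψ * φ = φ * ψ := by
      apply LinearMap.ext
      intro x
      have h1 : ψ (φ x) = g (q (φ ((q x : W) : V))) := by
        rw [hψdef]
        simp only [Module.End.mul_apply, LinearMap.comp_apply]
        rw [hqφ]
      -- now q x ∈ W, expand in basis
      have hrep := Basis.sum_repr bW (q x)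
      rw [Module.End.mul_apply, Module.End.mul_apply, h1]
      conv_lhs => rw [← hrep]
      conv_rhs => rw [hψdef]
      simp only [LinearMap.comp_apply]
      conv_rhs => rw [← hrep]
      rw [map_sum, map_sum]
      push_cast
      simp only [Submodule.coe_sum, Submodule.coe_smul, map_sum, map_smul]
      refine Finset.sum_congr rfl fun i _ => ?_
      congr 1
      rw [hbW]
      exact hqφb i
    have hψb : ∀ i : Fin m, ψ (b i) = (φ ^ (i : ℕ)) u := by
      intro i
      rw [hψdef]
      simp only [LinearMap.comp_apply]
      rw [← hbW, hqW, hg]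
    have hψv : ψ v = u := by
      have : v = b ⟨0, hmpos⟩ := by rw [hbdef]; simp
      rw [this, hψb]
      simp
    refine ⟨ψ, hcomm, hψv, hψb, ?_⟩
    rintro x ⟨y, rfl⟩
    rw [hψdef]
    simp only [LinearMap.comp_apply]
    have hrep := Basis.sum_repr bW (q y)
    rw [← hrep, map_sum]
    apply Submodule.sum_mem
    intro i _
    rw [map_smul, hg]
    exact Submodule.smul_mem _ _ (Submodule.subset_span ⟨i, rfl⟩)
  -- σ v ∈ W
  obtain ⟨ψv, hψvφ, hψvv, _, hψvrange⟩ := main v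
  have hσvW : σ v ∈ W := by
    have hcs := hsub ψv hψvφ
    have : ψv (σ v) = σ v := by
      have := congrFun (congrArg DFunLike.coe hcs) v
      simp only [Module.End.mul_apply] at this
      rw [hψvv] at this
      exact this.symm ▸ this
    rw [← this]
    exact hψvrange ⟨σ v, rfl⟩
  -- coefficients
  set c : Fin m → K := fun i => bW.repr ⟨σ v, hσvW⟩ i with hcdef
  have hσv : σ v = ∑ i, c i • b i := by
    have hrep := Basis.sum_repr bW ⟨σ v, hσvW⟩
    have := congrArg (Submodule.subtype W) hrep
    simp only [map_sum, map_smul, Submodule.subtype_apply] at this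
    rw [← this]
    exact (Finset.sum_congr rfl fun i _ => by rw [hbW]).symm
  refine ⟨∑ i : Fin m, Polynomial.C (c i) * Polynomial.X ^ (i : ℕ), ?_⟩
  apply LinearMap.ext
  intro u
  obtain ⟨ψ, hψφ, hψv, hψb, _⟩ := main u
  have hcs := hsub ψ hψφ
  have h1 : σ u = ψ (σ v) := by
    have := congrFun (congrArg DFunLike.coe hcs) v
    simp only [Module.End.mul_apply] at this
    rw [hψv] at this
    exact this.symm
  rw [h1, hσv, map_sum]
  simp only [map_smul]
  rw [map_sum]
  simp only [map_mul, map_pow, Polynomial.aeval_C, Polynomial.aeval_X, LinearMap.sum_apply,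
    Module.End.mul_apply, Module.algebraMap_end_apply, LinearMap.smul_apply]
  refine Finset.sum_congr rfl fun i _ => ?_
  rw [hψb i]
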